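/- Let L be a finite topographically balanced lattice with rank function ρ, and let s, t ∈ L. Then there exist saturated chains s = x₀ ⋖ x₁ ⋖ ⋯ ⋖ x_m = s ∨ t and t = y₀ ⋖ y₁ ⋖ ⋯ ⋖ y_n = s ∨ t with m + n = d(s,t) (a shortest path from s to t through the join, a 'mountain path'), and dually there exist saturated chains s ∧ t = x'₀ ⋖ ⋯ ⋖ x'_p = s and s ∧ t = y'₀ ⋖ ⋯ ⋖ y'_q = t with p + q = d(s,t) (a shortest path through the meet, a 'valley path'). -/

import Mathlib

def TopBalanced (L : Type*) [Lattice L] : Prop :=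
  (∀ v s t : L, v ⋖ s → v ⋖ t → s ≠ t → ∃! u : L, s ⋖ u ∧ t ⋖ u) ∧
  (∀ s t u : L, s ⋖ u → t ⋖ u → s ≠ t → ∃! v : L, v ⋖ s ∧ v ⋖ t)

def IsRankFunction (L : Type*) [Lattice L] [OrderBot L] (ρ : L → ℕ) : Prop :=
  ρ ⊥ = 0 ∧ ∀ x y : L, x ⋖ y → ρ y = ρ x + 1

/-- The cover graph of a lattice: `x` and `y` are adjacent iff one covers the other. -/
def coverGraph (L : Type*) [Lattice L] : SimpleGraph L where
  Adj x y := x ⋖ y ∨ y ⋖ x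
  symm := ⟨fun _ _ h => h.symm⟩
  loopless := ⟨fun _ h => by rcases h with h | h <;> exact h.lt.false⟩

section Aux

variable {L : Type*} [Lattice L] [Fintype L]

/-- A saturated chain from `a` up to `b`, of length `ρ b - ρ a`. -/
private lemma aux_exists_chainUp (ρ : L → ℕ) (hcov : ∀ x y : L, x ⋖ y → ρ y = ρ x + 1)
    (b : L) : ∀ a : L, a ≤ b → ∃ (k : ℕ) (f : ℕ → L),
      f 0 = a ∧ f k = b ∧ (∀ j < k, f j ⋖ f (j + 1)) ∧ ρ b = ρ a + k := by
  intro a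
  refine (wellFounded_gt (α := L)).induction
    (C := fun a => a ≤ b → ∃ (k : ℕ) (f : ℕ → L),
      f 0 = a ∧ f k = b ∧ (∀ j < k, f j ⋖ f (j + 1)) ∧ ρ b = ρ a + k) a ?_
  intro x IH hxb
  rcases eq_or_lt_of_le hxb with rfl | hlt
  · exact ⟨0, fun _ => x, rfl, rfl, fun j hj => absurd hj (Nat.not_lt_zero j), by simp⟩
  · obtain ⟨c, hxc, hcb⟩ := hlt.exists_covby_le
    obtain ⟨k, f, hf0, hfk, hstep, hrk⟩ := IH c hxc.lt hcb
    refine ⟨k + 1, fun n => if n = 0 then x else f (n - 1), by simp, by simp [hfk], ?_, ?_⟩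
    · intro j hj
      rcases Nat.eq_zero_or_pos j with rfl | hjpos
      · simpa [hf0] using hxc
      · have h1 : ¬ (j = 0) := by omega
        have h2 : ¬ (j + 1 = 0) := by omega
        simp only [if_neg h1, if_neg h2]
        have h3 : j - 1 < k := by omega
        have h4 := hstep (j - 1) h3
        have h5 : j - 1 + 1 = j := by omega
        rw [h5] at h4
        have h6 : j + 1 - 1 = j := by omega
        rw [h6]
        exact h4
    · have := hcov x c hxc
      omega

private lemma aux_rank_mono (ρ : L → ℕ) (hcov : ∀ x y : L, x ⋖ y → ρ y = ρ x + 1)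
    {a b : L} (h : a ≤ b) : ρ a ≤ ρ b := by
  obtain ⟨k, f, _, _, _, hr⟩ := aux_exists_chainUp ρ hcov b a h
  omega

/-- Concatenating an up-chain from `a` to `c` with a reversed up-chain from `b` to `c`
gives a walk (in the cover relation) from `a` to `b`. -/
private lemma aux_concat (x y : ℕ → L) (m n : ℕ) (a b c : L)
    (hx0 : x 0 = a) (hxm : x m = c) (hxs : ∀ j < m, x j ⋖ x (j + 1))
    (hy0 : y 0 = b) (hyn : y n = c) (hys : ∀ j < n, y j ⋖ y (j + 1)) :
    ∃ f : ℕ → L, f 0 = a ∧ f (m + n) = b ∧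
      ∀ j < m + n, f j ⋖ f (j + 1) ∨ f (j + 1) ⋖ f j := by
  refine ⟨fun i => if i ≤ m then x i else y (m + n - i), by simpa using hx0, ?_, ?_⟩
  · by_cases hn : m + n ≤ m
    · have hn0 : n = 0 := by omega
      subst hn0
      simp only [Nat.add_zero, le_refl, if_pos]
      rw [hxm, ← hyn, hy0]
    · simp only [if_neg hn, Nat.sub_self, hy0]
  · intro j hj
    show (if j ≤ m then x j else y (m + n - j)) ⋖ (if j + 1 ≤ m then x (j+1) else y (m + n - (j+1))) ∨
      (if j + 1 ≤ m then x (j+1) else y (m + n - (j+1))) ⋖ (if j ≤ m then x j else y (m + n - j))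
    by_cases hjm : j + 1 ≤ m
    · left
      rw [if_pos (by omega : j ≤ m), if_pos hjm]
      exact hxs j (by omega)
    · right
      have hr : m + n - (j + 1) < n := by omega
      have hstep := hys (m + n - (j + 1)) hr
      have he : m + n - (j + 1) + 1 = m + n - j := by omega
      rw [he] at hstep
      rw [if_neg hjm]
      by_cases hjm2 : j ≤ m
      · have hjm3 : j = m := by omega
        rw [if_pos hjm2]
        have hx : x j = y (m + n - j) := by
          rw [hjm3, hxm, ← hyn]
          congr 1
          omega
        rw [hx]
        exact hstep
      · rw [if_neg hjm2]
        exact hstep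

/-- From a walk function build an honest walk in the cover graph. -/
private lemma aux_walk_exists (s : L) : ∀ (k : ℕ) (f : ℕ → L) (t : L), f 0 = s → f k = t →
    (∀ j < k, f j ⋖ f (j + 1) ∨ f (j + 1) ⋖ f j) →
    ∃ w : (coverGraph L).Walk s t, w.length = k := by
  intro k
  induction k with
  | zero =>
    intro f t h0 hk _
    subst h0; subst hk
    exact ⟨SimpleGraph.Walk.nil, rfl⟩
  | succ k ih =>
    intro f t h0 hk hsteps
    subst h0; subst hk
    obtain ⟨w, hw⟩ := ih f (f k) rfl rfl (fun j hj => hsteps j (by omega))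
    have hadj : (coverGraph L).Adj (f k) (f (k + 1)) := hsteps k (by omega)
    exact ⟨w.concat hadj, by rw [SimpleGraph.Walk.length_concat, hw]⟩

private lemma aux_dist_le (s : L) (k : ℕ) (f : ℕ → L) (t : L) (h0 : f 0 = s) (hk : f k = t)
    (hsteps : ∀ j < k, f j ⋖ f (j + 1) ∨ f (j + 1) ⋖ f j) :
    (coverGraph L).dist s t ≤ k := by
  obtain ⟨w, hw⟩ := aux_walk_exists s k f t h0 hk hsteps
  exact hw ▸ SimpleGraph.dist_le w

/-- The key lemma: if a distance-`d` pair admits a length-`d` walk and no shorter walk,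
then there is a "mountain" pair of saturated chains through the join. -/
private lemma aux_mountain {L : Type*} [Lattice L] [Fintype L]
    (hup : ∀ v a b : L, v ⋖ a → v ⋖ b → a ≠ b → ∃ u : L, a ⋖ u ∧ b ⋖ u)
    (ρ : L → ℕ) (hcov : ∀ x y : L, x ⋖ y → ρ y = ρ x + 1)
    (s t : L) (d : ℕ)
    (hex : ∃ f : ℕ → L, f 0 = s ∧ f d = t ∧ ∀ j < d, f j ⋖ f (j + 1) ∨ f (j + 1) ⋖ f j)
    (hmin : ∀ (k : ℕ) (f : ℕ → L), f 0 = s → f k = t →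
      (∀ j < k, f j ⋖ f (j + 1) ∨ f (j + 1) ⋖ f j) → d ≤ k) :
    ∃ (m n : ℕ) (x y : ℕ → L),
      x 0 = s ∧ x m = s ⊔ t ∧ (∀ j < m, x j ⋖ x (j + 1)) ∧
      y 0 = t ∧ y n = s ⊔ t ∧ (∀ j < n, y j ⋖ y (j + 1)) ∧ m + n = d := by
  classical
  obtain ⟨m₀, x, hx0, hxm, hxs, hrx⟩ := aux_exists_chainUp ρ hcov (s ⊔ t) s le_sup_left
  obtain ⟨n₀, y, hy0, hyn, hys, hry⟩ := aux_exists_chainUp ρ hcov (s ⊔ t) t le_sup_right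
  obtain ⟨w, hw0, hwmn, hws⟩ := aux_concat x y m₀ n₀ s t (s ⊔ t) hx0 hxm hxs hy0 hyn hys
  have hub : d ≤ m₀ + n₀ := hmin _ w hw0 hwmn hws
  set M := Finset.univ.sup ρ with hM
  have hΦle : ∀ f : ℕ → L, (∑ i ∈ Finset.range (d + 1), ρ (f i)) ≤ (d + 1) * M := by
    intro f
    calc (∑ i ∈ Finset.range (d + 1), ρ (f i)) ≤ (Finset.range (d + 1)).card • M :=
          Finset.sum_le_card_nsmul _ _ M (fun i _ => Finset.le_sup (Finset.mem_univ _))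
      _ = (d + 1) * M := by simp [Finset.card_range, smul_eq_mul]
  -- removing a local valley increases the potential by 2
  have hstep_valley : ∀ f : ℕ → L,
      (f 0 = s ∧ f d = t ∧ ∀ j < d, f j ⋖ f (j + 1) ∨ f (j + 1) ⋖ f j) → ∀ j, j + 1 < d →
      f (j + 1) ⋖ f j → f (j + 1) ⋖ f (j + 2) →
      ∃ f' : ℕ → L, (f' 0 = s ∧ f' d = t ∧ ∀ j < d, f' j ⋖ f' (j + 1) ∨ f' (j + 1) ⋖ f' j) ∧
        (∑ i ∈ Finset.range (d + 1), ρ (f' i)) = (∑ i ∈ Finset.range (d + 1), ρ (f i)) + 2 := by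
    intro f hf j hj hd1 hd2
    obtain ⟨hf0, hfd, hfs⟩ := hf
    have hne : f j ≠ f (j + 2) := by
      intro heq
      have hg0 : (fun i => if i ≤ j then f i else f (i + 2)) 0 = s := by simp [hf0]
      have hgd : (fun i => if i ≤ j then f i else f (i + 2)) (d - 2) = t := by
        by_cases h : d - 2 ≤ j
        · have hjd : d - 2 = j := by omega
          have h2 : j + 2 = d := by omega
          simp only [if_pos h]
          rw [hjd, heq, h2, hfd]
        · simp only [if_neg h]
          have h2 : d - 2 + 2 = d := by omega
          rw [h2, hfd]
      have hgs : ∀ i < d - 2, (fun i => if i ≤ j then f i else f (i + 2)) i ⋖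
          (fun i => if i ≤ j then f i else f (i + 2)) (i + 1) ∨
          (fun i => if i ≤ j then f i else f (i + 2)) (i + 1) ⋖
          (fun i => if i ≤ j then f i else f (i + 2)) i := by
        intro i hi
        by_cases h1 : i + 1 ≤ j
        · simp only [if_pos (by omega : i ≤ j), if_pos h1]
          exact hfs i (by omega)
        · by_cases h2 : i ≤ j
          · have hij : i = j := by omega
            simp only [if_pos h2, if_neg h1]
            rw [hij, heq, ← hij]
            exact hfs (i + 2) (by omega)
          · simp only [if_neg h2, if_neg h1]
            exact hfs (i + 2) (by omega)
      have := hmin (d - 2) (fun i => if i ≤ j then f i else f (i + 2)) hg0 hgd hgs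
      omega
    obtain ⟨u, hu1, hu2⟩ := hup (f (j + 1)) (f j) (f (j + 2)) hd1 hd2 hne
    refine ⟨Function.update f (j + 1) u, ⟨?_, ?_, ?_⟩, ?_⟩
    · rw [Function.update_of_ne (by omega : (0 : ℕ) ≠ j + 1)]
      exact hf0
    · rw [Function.update_of_ne (by omega : d ≠ j + 1)]
      exact hfd
    · intro i hi
      rcases eq_or_ne i (j + 1) with rfl | hij
      · right
        rw [Function.update_self, Function.update_of_ne (by omega : j + 1 + 1 ≠ j + 1)]
        exact hu2
      rcases eq_or_ne i j with rfl | hij2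
      · left
        rw [Function.update_self, Function.update_of_ne hij]
        exact hu1
      · rw [Function.update_of_ne hij, Function.update_of_ne (by omega : i + 1 ≠ j + 1)]
        exact hfs i hi
    · have hru : ρ u = ρ (f (j + 1)) + 2 := by
        have h1 := hcov _ _ hd1
        have h2 := hcov _ _ hu1
        omega
      have hmem : j + 1 ∈ Finset.range (d + 1) := Finset.mem_range.mpr (by omega)
      have key : ∀ F : ℕ → L, (∑ i ∈ Finset.range (d + 1), ρ (F i)) =
          ρ (F (j + 1)) + ∑ i ∈ (Finset.range (d + 1)).erase (j + 1), ρ (F i) :=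
        fun F => (Finset.add_sum_erase _ _ hmem).symm
      rw [key (Function.update f (j + 1) u), key f]
      have hsame : (∑ i ∈ (Finset.range (d + 1)).erase (j + 1), ρ (Function.update f (j + 1) u i))
          = ∑ i ∈ (Finset.range (d + 1)).erase (j + 1), ρ (f i) :=
        Finset.sum_congr rfl (fun i hi => by rw [Function.update_of_ne (Finset.ne_of_mem_erase hi)])
      rw [hsame, Function.update_self, hru]
      omega
  -- obtain a valley-free shortest walk
  have hkey : ∀ (N : ℕ) (f : ℕ → L),
      (f 0 = s ∧ f d = t ∧ ∀ j < d, f j ⋖ f (j + 1) ∨ f (j + 1) ⋖ f j) →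
      (d + 1) * M ≤ (∑ i ∈ Finset.range (d + 1), ρ (f i)) + N →
      ∃ g : ℕ → L, (g 0 = s ∧ g d = t ∧ ∀ j < d, g j ⋖ g (j + 1) ∨ g (j + 1) ⋖ g j) ∧
        ∀ j, j + 1 < d → ¬ (g (j + 1) ⋖ g j ∧ g (j + 1) ⋖ g (j + 2)) := by
    intro N
    induction N with
    | zero =>
      intro f hf hb
      refine ⟨f, hf, ?_⟩
      intro j hj hval
      obtain ⟨f', _, hΦ'⟩ := hstep_valley f hf j hj hval.1 hval.2
      have := hΦle f'
      omega
    | succ N ih =>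
      intro f hf hb
      by_cases hval : ∃ j, j + 1 < d ∧ (f (j + 1) ⋖ f j ∧ f (j + 1) ⋖ f (j + 2))
      · obtain ⟨j, hj, h1, h2⟩ := hval
        obtain ⟨f', hf', hΦ'⟩ := hstep_valley f hf j hj h1 h2
        exact ih f' hf' (by omega)
      · exact ⟨f, hf, fun j hj hc => hval ⟨j, hj, hc⟩⟩
  obtain ⟨f, hfC⟩ := hex
  obtain ⟨g, ⟨hg0, hgd, hgs⟩, hnov⟩ := hkey ((d + 1) * M) f hfC (by omega)
  -- the valley-free walk is a mountain
  have hshape : ∃ m, m ≤ d ∧ (∀ j < m, g j ⋖ g (j + 1)) ∧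
      (∀ j, m ≤ j → j < d → g (j + 1) ⋖ g j) := by
    by_cases hdown : ∃ j, j < d ∧ g (j + 1) ⋖ g j
    · have hspec := Nat.find_spec hdown
      refine ⟨Nat.find hdown, hspec.1.le, ?_, ?_⟩
      · intro j hj
        rcases hgs j (by omega) with h | h
        · exact h
        · exact absurd ⟨by omega, h⟩ (Nat.find_min hdown hj)
      · have : ∀ j, Nat.find hdown ≤ j → (j < d → g (j + 1) ⋖ g j) := by
          intro j hj
          induction j, hj using Nat.le_induction with
          | base => intro _; exact hspec.2
          | succ n hn ihn =>
            intro hnd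
            have hdn := ihn (by omega)
            rcases hgs (n + 1) hnd with h | h
            · exact absurd ⟨hdn, h⟩ (hnov n (by omega))
            · exact h
        exact fun j h1 h2 => this j h1 h2
    · refine ⟨d, le_refl d, ?_, fun j h1 h2 => by omega⟩
      intro j hj
      rcases hgs j hj with h | h
      · exact h
      · exact (hdown ⟨j, hj, h⟩).elim
  obtain ⟨m, hmd, hupS, hdownS⟩ := hshape
  have hupFacts : ∀ j, j ≤ m → s ≤ g j ∧ ρ (g j) = ρ s + j := by
    intro j
    induction j with
    | zero => intro _; rw [hg0]; exact ⟨le_refl s, by omega⟩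
    | succ j ihj =>
      intro hjm
      obtain ⟨h1, h2⟩ := ihj (by omega)
      have hc := hupS j (by omega)
      have := hcov _ _ hc
      exact ⟨h1.trans hc.le, by omega⟩
  have hdownFacts : ∀ i, i ≤ d - m → t ≤ g (d - i) ∧ ρ (g (d - i)) = ρ t + i := by
    intro i
    induction i with
    | zero => intro _; rw [Nat.sub_zero, hgd]; exact ⟨le_refl t, by omega⟩
    | succ i ihi =>
      intro hi
      obtain ⟨h1, h2⟩ := ihi (by omega)
      have hc := hdownS (d - (i + 1)) (by omega) (by omega)
      have he : d - (i + 1) + 1 = d - i := by omega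
      rw [he] at hc
      have := hcov _ _ hc
      exact ⟨h1.trans hc.le, by omega⟩
  obtain ⟨hsm, hρm⟩ := hupFacts m le_rfl
  obtain ⟨htm, hρm'⟩ := hdownFacts (d - m) le_rfl
  have hmm : d - (d - m) = m := by omega
  rw [hmm] at htm hρm'
  have hjoin : s ⊔ t ≤ g m := sup_le hsm htm
  have hρjoin := aux_rank_mono ρ hcov hjoin
  exact ⟨m₀, n₀, x, y, hx0, hxm, hxs, hy0, hyn, hys, by omega⟩

end Aux

theorem stmt_2 (L : Type*) [Lattice L] [OrderBot L] [Fintype L]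
    (htb : TopBalanced L) (ρ : L → ℕ) (hρ : IsRankFunction L ρ) (s t : L) :
    (∃ (m n : ℕ) (x y : ℕ → L),
      x 0 = s ∧ x m = s ⊔ t ∧ (∀ j < m, x j ⋖ x (j + 1)) ∧
      y 0 = t ∧ y n = s ⊔ t ∧ (∀ j < n, y j ⋖ y (j + 1)) ∧
      m + n = (coverGraph L).dist s t) ∧
    (∃ (p q : ℕ) (x y : ℕ → L),
      x 0 = s ⊓ t ∧ x p = s ∧ (∀ j < p, x j ⋖ x (j + 1)) ∧
      y 0 = s ⊓ t ∧ y q = t ∧ (∀ j < q, y j ⋖ y (j + 1)) ∧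
      p + q = (coverGraph L).dist s t) := by
  classical
  have hcov := hρ.2
  obtain ⟨m₁, x₁, hx0, hxm, hxs, _⟩ := aux_exists_chainUp ρ hcov (s ⊔ t) s le_sup_left
  obtain ⟨n₁, y₁, hy0, hyn, hys, _⟩ := aux_exists_chainUp ρ hcov (s ⊔ t) t le_sup_right
  obtain ⟨w₀, hw0, hwmn, hws⟩ := aux_concat x₁ y₁ m₁ n₁ s t (s ⊔ t) hx0 hxm hxs hy0 hyn hys
  obtain ⟨W, _⟩ := aux_walk_exists s (m₁ + n₁) w₀ t hw0 hwmn hws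
  have hreach : (coverGraph L).Reachable s t := ⟨W⟩
  obtain ⟨P, hP⟩ := hreach.exists_walk_length_eq_dist
  set d := (coverGraph L).dist s t with hd
  have hex : ∃ f : ℕ → L, f 0 = s ∧ f d = t ∧
      ∀ j < d, f j ⋖ f (j + 1) ∨ f (j + 1) ⋖ f j := by
    refine ⟨P.getVert, P.getVert_zero, ?_, ?_⟩
    · rw [← hP]; exact P.getVert_length
    · intro j hj
      exact P.adj_getVert_succ (by rw [hP]; exact hj)
  have hmin : ∀ (k : ℕ) (f : ℕ → L), f 0 = s → f k = t →
      (∀ j < k, f j ⋖ f (j + 1) ∨ f (j + 1) ⋖ f j) → d ≤ k := by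
    intro k f h0 hk hsteps
    exact aux_dist_le s k f t h0 hk hsteps
  constructor
  · exact aux_mountain (fun v a b h1 h2 hne => (htb.1 v a b h1 h2 hne).exists)
      ρ hcov s t d hex hmin
  · -- dual part: apply the mountain lemma to `Lᵒᵈ`
    set M := Finset.univ.sup ρ with hM
    have hcov' : ∀ a b : Lᵒᵈ, a ⋖ b →
        M - ρ (OrderDual.ofDual b) = (M - ρ (OrderDual.ofDual a)) + 1 := by
      intro a b hab
      have h := hcov (OrderDual.ofDual b) (OrderDual.ofDual a)
        (ofDual_covBy_ofDual_iff.mpr hab)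
      have hb : ρ (OrderDual.ofDual a) ≤ M := Finset.le_sup (Finset.mem_univ _)
      omega
    have hup' : ∀ v a b : Lᵒᵈ, v ⋖ a → v ⋖ b → a ≠ b → ∃ u : Lᵒᵈ, a ⋖ u ∧ b ⋖ u := by
      intro v a b h1 h2 hne
      obtain ⟨u, hu1, hu2⟩ := (htb.2 (OrderDual.ofDual a) (OrderDual.ofDual b)
        (OrderDual.ofDual v) (ofDual_covBy_ofDual_iff.mpr h1)
        (ofDual_covBy_ofDual_iff.mpr h2)
        (fun h => hne (OrderDual.ofDual_inj.mp h))).exists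
      exact ⟨OrderDual.toDual u, ofDual_covBy_ofDual_iff.mp hu1,
        ofDual_covBy_ofDual_iff.mp hu2⟩
    obtain ⟨f, hf0, hfd, hfs⟩ := hex
    have hex' : ∃ F : ℕ → Lᵒᵈ, F 0 = OrderDual.toDual s ∧ F d = OrderDual.toDual t ∧
        ∀ j < d, F j ⋖ F (j + 1) ∨ F (j + 1) ⋖ F j := by
      refine ⟨fun i => OrderDual.toDual (f i), congrArg OrderDual.toDual hf0, congrArg OrderDual.toDual hfd, ?_⟩
      intro j hj
      rcases hfs j hj with h | h
      · exact Or.inr h.toDual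
      · exact Or.inl h.toDual
    have hmin' : ∀ (k : ℕ) (F : ℕ → Lᵒᵈ), F 0 = OrderDual.toDual s →
        F k = OrderDual.toDual t →
        (∀ j < k, F j ⋖ F (j + 1) ∨ F (j + 1) ⋖ F j) → d ≤ k := by
      intro k F h0 hk hsteps
      refine hmin k (fun i => OrderDual.ofDual (F i)) (congrArg OrderDual.ofDual h0) (congrArg OrderDual.ofDual hk) ?_
      intro j hj
      rcases hsteps j hj with h | h
      · exact Or.inr h.ofDual
      · exact Or.inl h.ofDual
    obtain ⟨p, q, X, Y, hX0, hXp, hXs, hY0, hYq, hYs, hpq⟩ :=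
      aux_mountain hup' (fun z : Lᵒᵈ => M - ρ (OrderDual.ofDual z)) hcov'
        (OrderDual.toDual s) (OrderDual.toDual t) d hex' hmin'
    have hsup : OrderDual.toDual s ⊔ OrderDual.toDual t = OrderDual.toDual (s ⊓ t) :=
      (toDual_inf s t).symm
    refine ⟨p, q, fun j => OrderDual.ofDual (X (p - j)), fun j => OrderDual.ofDual (Y (q - j)),
      ?_, ?_, ?_, ?_, ?_, ?_, hpq⟩
    · show OrderDual.ofDual (X (p - 0)) = s ⊓ t
      rw [Nat.sub_zero, hXp, hsup]; rfl
    · show OrderDual.ofDual (X (p - p)) = s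
      rw [Nat.sub_self, hX0]; rfl
    · intro j hj
      show OrderDual.ofDual (X (p - j)) ⋖ OrderDual.ofDual (X (p - (j + 1)))
      have h := hXs (p - j - 1) (by omega)
      have he : p - j - 1 + 1 = p - j := by omega
      rw [he] at h
      have he2 : p - (j + 1) = p - j - 1 := by omega
      rw [he2]
      exact h.ofDual
    · show OrderDual.ofDual (Y (q - 0)) = s ⊓ t
      rw [Nat.sub_zero, hYq, hsup]; rfl
    · show OrderDual.ofDual (Y (q - q)) = t
      rw [Nat.sub_self, hY0]; rfl
    · intro j hj
      show OrderDual.ofDual (Y (q - j)) ⋖ OrderDual.ofDual (Y (q - (j + 1)))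
      have h := hYs (q - j - 1) (by omega)
      have he : q - j - 1 + 1 = q - j := by omega
      rw [he] at h
      have he2 : q - (j + 1) = q - j - 1 := by omega
      rw [he2]
      exact h.ofDual
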